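/- Let n ≥ 2, A = [1, n-1], and let g_1, g_2, g_3, g_4 be a sequence over C_n × C_n. Assume every 3-term subsequence of g_1,...,g_4 has a nonempty A-weighted product-one subsequence (this holds since D_A(C_n^2) = 3). Then there exist 1 ≤ i ≤ j ≤ 4 and exponents a_i, ..., a_j ∈ A with g_i^{a_i} ⋯ g_j^{a_j} = 1. -/
import Mathlib


/-- A list `S` over an additive monoid has a nonempty `A`-weighted consecutive zero-sum
subsequence. -/
def WConsecZero {G : Type*} [AddMonoid G] (A : Set ℕ) (S : List G) : Prop :=
  ∃ T : List (G × ℕ), T ≠ [] ∧ T.map Prod.fst <:+: S ∧ (∀ p ∈ T, p.2 ∈ A) ∧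
    (T.map fun p => p.2 • p.1).sum = 0

/-- The `A`-weighted consecutive Davenport constant `C_A(G)`, additive notation. -/
noncomputable def CDavAdd (A : Set ℕ) (G : Type*) [AddMonoid G] : ℕ :=
  sInf {ℓ : ℕ | ∀ S : List G, ℓ ≤ S.length → WConsecZero A S}

/-- If every 3-term subsequence of `g₁, g₂, g₃, g₄` over `C_n × C_n` has a nonempty
`A`-weighted zero-sum subsequence for `A = [1, n-1]`, then the whole sequence has an
`A`-weighted *consecutive* zero-sum subsequence. -/
theorem stmt16 (n : ℕ) (hn : 2 ≤ n) (g : Fin 4 → ZMod n × ZMod n)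
    (h3 : ∀ i j l : Fin 4, i < j → j < l →
      ∃ a b c : ℕ,
        (a ∈ Set.Icc 1 (n - 1) ∨ a = 0) ∧ (b ∈ Set.Icc 1 (n - 1) ∨ b = 0) ∧
        (c ∈ Set.Icc 1 (n - 1) ∨ c = 0) ∧ ¬ (a = 0 ∧ b = 0 ∧ c = 0) ∧
        a • g i + b • g j + c • g l = 0) :
    ∃ i j : Fin 4, i ≤ j ∧ ∃ a : Fin 4 → ℕ,
      (∀ t, i ≤ t → t ≤ j → a t ∈ Set.Icc 1 (n - 1)) ∧
      ∑ t ∈ Finset.Icc i j, a t • g t = 0 := by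
  obtain ⟨a, b, c, ha, hb, hc, hne, hsum⟩ := h3 0 1 2 (by decide) (by decide)
  rcases hb with hb | rfl
  · rcases ha with ha | rfl <;> rcases hc with hc | rfl
    · refine ⟨0, 2, by decide, ![a, b, c, 0], ?_, ?_⟩
      · intro t h1 h2; fin_cases t <;> first | exact ha | exact hb | exact hc | exact ha' | exact hb' | exact hc' | exact absurd h2 (by decide) | exact absurd h1 (by decide)
      · rw [show Finset.Icc (0 : Fin 4) 2 = {0, 1, 2} from by decide,
          Finset.sum_insert (by decide), Finset.sum_insert (by decide),
          Finset.sum_singleton]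
        show a • g 0 + (b • g 1 + c • g 2) = 0
        rw [← add_assoc]; exact hsum
    · simp only [zero_smul, add_zero] at hsum
      refine ⟨0, 1, by decide, ![a, b, 0, 0], ?_, ?_⟩
      · intro t h1 h2; fin_cases t <;> first | exact ha | exact hb | exact hc | exact ha' | exact hb' | exact hc' | exact absurd h2 (by decide) | exact absurd h1 (by decide)
      · rw [show Finset.Icc (0 : Fin 4) 1 = {0, 1} from by decide,
          Finset.sum_insert (by decide), Finset.sum_singleton]
        exact hsum
    · simp only [zero_smul, zero_add] at hsum
      refine ⟨1, 2, by decide, ![0, b, c, 0], ?_, ?_⟩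
      · intro t h1 h2; fin_cases t <;> first | exact ha | exact hb | exact hc | exact ha' | exact hb' | exact hc' | exact absurd h2 (by decide) | exact absurd h1 (by decide)
      · rw [show Finset.Icc (1 : Fin 4) 2 = {1, 2} from by decide,
          Finset.sum_insert (by decide), Finset.sum_singleton]
        exact hsum
    · simp only [zero_smul, zero_add, add_zero] at hsum
      refine ⟨1, 1, le_refl _, fun _ => b, fun _ _ _ => hb, ?_⟩
      rw [Finset.Icc_self, Finset.sum_singleton]; exact hsum
  · rcases ha with ha | rfl
    · rcases hc with hc | rfl
      · -- gap relation: a • g 0 + c • g 2 = 0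
        simp only [zero_smul, add_zero, zero_add] at hsum
        obtain ⟨a', b', c', ha', hb', hc', hne', hsum'⟩ := h3 1 2 3 (by decide) (by decide)
        rcases hb' with hb' | rfl
        · rcases ha' with ha' | rfl <;> rcases hc' with hc' | rfl
          · refine ⟨1, 3, by decide, ![0, a', b', c'], ?_, ?_⟩
            · intro t h1 h2; fin_cases t <;> first | exact ha | exact hb | exact hc | exact ha' | exact hb' | exact hc' | exact absurd h2 (by decide) | exact absurd h1 (by decide)
            · rw [show Finset.Icc (1 : Fin 4) 3 = {1, 2, 3} from by decide,
                Finset.sum_insert (by decide), Finset.sum_insert (by decide),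
                Finset.sum_singleton]
              show a' • g 1 + (b' • g 2 + c' • g 3) = 0
              rw [← add_assoc]; exact hsum'
          · simp only [zero_smul, add_zero] at hsum'
            refine ⟨1, 2, by decide, ![0, a', b', 0], ?_, ?_⟩
            · intro t h1 h2; fin_cases t <;> first | exact ha | exact hb | exact hc | exact ha' | exact hb' | exact hc' | exact absurd h2 (by decide) | exact absurd h1 (by decide)
            · rw [show Finset.Icc (1 : Fin 4) 2 = {1, 2} from by decide,
                Finset.sum_insert (by decide), Finset.sum_singleton]
              exact hsum'
          · simp only [zero_smul, zero_add] at hsum'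
            refine ⟨2, 3, by decide, ![0, 0, b', c'], ?_, ?_⟩
            · intro t h1 h2; fin_cases t <;> first | exact ha | exact hb | exact hc | exact ha' | exact hb' | exact hc' | exact absurd h2 (by decide) | exact absurd h1 (by decide)
            · rw [show Finset.Icc (2 : Fin 4) 3 = {2, 3} from by decide,
                Finset.sum_insert (by decide), Finset.sum_singleton]
              exact hsum'
          · simp only [zero_smul, zero_add, add_zero] at hsum'
            refine ⟨2, 2, le_refl _, fun _ => b', fun _ _ _ => hb', ?_⟩
            rw [Finset.Icc_self, Finset.sum_singleton]; exact hsum'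
        · rcases ha' with ha' | rfl
          · rcases hc' with hc' | rfl
            · -- second gap: a' • g 1 + c' • g 3 = 0; combine both gaps
              simp only [zero_smul, add_zero, zero_add] at hsum'
              refine ⟨0, 3, by decide, ![a, a', c, c'], ?_, ?_⟩
              · intro t h1 h2; fin_cases t <;> first | exact ha | exact hb | exact hc | exact ha' | exact hb' | exact hc' | exact absurd h2 (by decide) | exact absurd h1 (by decide)
              · rw [show Finset.Icc (0 : Fin 4) 3 = {0, 1, 2, 3} from by decide,
                  Finset.sum_insert (by decide), Finset.sum_insert (by decide),
                  Finset.sum_insert (by decide), Finset.sum_singleton]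
                show a • g 0 + (a' • g 1 + (c • g 2 + c' • g 3)) = 0
                have h : a • g 0 + (a' • g 1 + (c • g 2 + c' • g 3)) =
                    (a • g 0 + c • g 2) + (a' • g 1 + c' • g 3) := by abel
                rw [h, hsum, hsum', add_zero]
            · simp only [zero_smul, add_zero, zero_add] at hsum'
              refine ⟨1, 1, le_refl _, fun _ => a', fun _ _ _ => ha', ?_⟩
              rw [Finset.Icc_self, Finset.sum_singleton]; exact hsum'
          · rcases hc' with hc' | rfl
            · simp only [zero_smul, zero_add, add_zero] at hsum'
              refine ⟨3, 3, le_refl _, fun _ => c', fun _ _ _ => hc', ?_⟩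
              rw [Finset.Icc_self, Finset.sum_singleton]; exact hsum'
            · exact absurd ⟨rfl, rfl, rfl⟩ hne'
      · simp only [zero_smul, add_zero] at hsum
        refine ⟨0, 0, le_refl _, fun _ => a, fun _ _ _ => ha, ?_⟩
        rw [Finset.Icc_self, Finset.sum_singleton]; exact hsum
    · rcases hc with hc | rfl
      · simp only [zero_smul, zero_add] at hsum
        refine ⟨2, 2, le_refl _, fun _ => c, fun _ _ _ => hc, ?_⟩
        rw [Finset.Icc_self, Finset.sum_singleton]; exact hsum
      · exact absurd ⟨rfl, rfl, rfl⟩ hne
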